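/- Define, for x, y ∈ [0,1] and integer d ≥ 2, f(x,y,d) = (1 − x³)^{d−1}(1 − y³)^{d−1} and g(x,y,d) = (1 − x³ − y³ + x²y²·min{x,y})^{d−2} · (1 − (max{x,y})²). Then ∫₀¹∫₀¹ (g(x,y,d) − f(x,y,d)) dx dy = o(d^{−2/3}) as d → ∞. -/

import Mathlib

open Filter Asymptotics intervalIntegral MeasureTheory

lemma int_x2_pow (n : ℕ) : ∫ x in (0:ℝ)..1, x^2 * (1-x^3)^n = 1/(3*((n:ℝ)+1)) := by
  have h : ∀ x ∈ Set.uIcc (0:ℝ) 1,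
      HasDerivAt (fun x : ℝ => -(1-x^3)^(n+1)/(3*((n:ℝ)+1))) (x^2*(1-x^3)^n) x := by
    intro x _
    have h1 : HasDerivAt (fun x : ℝ => 1 - x^3) (-(3*x^2)) x := by
      simpa using ((hasDerivAt_pow 3 x).const_sub 1)
    have h2 := (h1.pow (n+1)).neg.div_const (3*((n:ℝ)+1))
    refine h2.congr_deriv ?_
    have : ((n:ℝ)+1) ≠ 0 := by positivity
    simp only [Nat.add_sub_cancel, Nat.cast_add, Nat.cast_one]
    field_simp
  rw [intervalIntegral.integral_eq_sub_of_hasDerivAt h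
    ((by continuity : Continuous fun x : ℝ => x^2*(1-x^3)^n).intervalIntegrable 0 1)]
  have : ((n:ℝ)+1) ≠ 0 := by positivity
  field_simp
  simp


lemma int_pow_nonneg (n : ℕ) : 0 ≤ ∫ x in (0:ℝ)..1, (1-x^3)^n := by
  apply intervalIntegral.integral_nonneg (by norm_num)
  intro x hx
  obtain ⟨h0, h1⟩ := hx
  have h3 : x^3 ≤ 1 := pow_le_one₀ h0 h1
  exact pow_nonneg (by linarith) n


lemma int_pow_le_one (n : ℕ) : (∫ x in (0:ℝ)..1, (1-x^3)^n) ≤ 1 := by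
  have h := intervalIntegral.integral_mono_on (a := (0:ℝ)) (b := 1) (μ := volume)
    (f := fun x => (1-x^3)^n) (g := fun _ => (1:ℝ)) (by norm_num)
    ((by continuity : Continuous fun x : ℝ => (1-x^3)^n).intervalIntegrable 0 1)
    (intervalIntegrable_const)
    (fun x hx => by
      obtain ⟨h0, h1⟩ := hx
      have h3 : x^3 ≤ 1 := pow_le_one₀ h0 h1
      have h2 : (0:ℝ) ≤ 1 - x^3 := by linarith
      calc (1-x^3)^n ≤ 1^n := pow_le_pow_left₀ h2 (sub_le_self _ (pow_nonneg h0 3)) n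
        _ = 1 := one_pow n)
  simpa using h


lemma pow_sub_pow_le' {a b : ℝ} (hb : 0 ≤ b) (hba : b ≤ a) :
    ∀ n : ℕ, a^n - b^n ≤ n * a^(n-1) * (a-b) := by
  have ha : 0 ≤ a := hb.trans hba
  intro n
  induction n with
  | zero => simp
  | succ m ih =>
    simp only [Nat.add_sub_cancel, Nat.cast_add, Nat.cast_one]
    have key : a^(m+1) - b^(m+1) = a * (a^m - b^m) + b^m * (a-b) := by ring
    have hab : 0 ≤ a - b := sub_nonneg.2 hba
    have h1 : a * (a^m - b^m) ≤ a * ((m:ℝ) * a^(m-1) * (a-b)) :=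
      mul_le_mul_of_nonneg_left ih ha
    have h2 : b^m ≤ a^m := pow_le_pow_left₀ hb hba m
    have h4 : a * ((m:ℝ) * a^(m-1) * (a-b)) ≤ (m:ℝ) * a^m * (a-b) := by
      cases m with
      | zero => simp
      | succ l =>
        apply le_of_eq
        simp only [Nat.add_sub_cancel]
        ring
    have h5 : b^m * (a-b) ≤ a^m * (a-b) := mul_le_mul_of_nonneg_right h2 hab
    calc a^(m+1) - b^(m+1) = a * (a^m - b^m) + b^m * (a-b) := key
      _ ≤ (m:ℝ) * a^m * (a-b) + a^m * (a-b) := by linarith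
      _ = ((m:ℝ)+1) * a^m * (a-b) := by ring

lemma int_comb (a b c : ℝ) (n m : ℕ) :
    ∫ x in (0:ℝ)..1, (a * (x^2*(1-x^3)^n) + (b * (x^2*(1-x^3)^m) + c * (1-x^3)^m))
      = a * (1/(3*((n:ℝ)+1))) + (b * (1/(3*((m:ℝ)+1))) + c * (∫ t in (0:ℝ)..1, (1-t^3)^m)) := by
  have i1 : IntervalIntegrable (fun x : ℝ => a * (x^2*(1-x^3)^n)) volume 0 1 :=
    (by fun_prop : Continuous fun x : ℝ => a * (x^2*(1-x^3)^n)).intervalIntegrable 0 1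
  have i2 : IntervalIntegrable (fun x : ℝ => b * (x^2*(1-x^3)^m)) volume 0 1 :=
    (by fun_prop : Continuous fun x : ℝ => b * (x^2*(1-x^3)^m)).intervalIntegrable 0 1
  have i3 : IntervalIntegrable (fun x : ℝ => c * (1-x^3)^m) volume 0 1 :=
    (by fun_prop : Continuous fun x : ℝ => c * (1-x^3)^m).intervalIntegrable 0 1
  rw [intervalIntegral.integral_add i1 (i2.add i3), intervalIntegral.integral_add i2 i3,
    intervalIntegral.integral_const_mul, intervalIntegral.integral_const_mul,
    intervalIntegral.integral_const_mul, int_x2_pow, int_x2_pow]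


lemma pointwise_bound (d : ℕ) (hd : 4 ≤ d) {x y : ℝ}
    (hx0 : 0 ≤ x) (hx1 : x ≤ 1) (hy0 : 0 ≤ y) (hy1 : y ≤ 1) :
    ‖(1 - x ^ 3 - y ^ 3 + x ^ 2 * y ^ 2 * min x y) ^ (d - 2) * (1 - max x y ^ 2) -
          (1 - x ^ 3) ^ (d - 1) * (1 - y ^ 3) ^ (d - 1)‖ ≤
      ((d:ℝ) - 2) * (x^2*(1-x^3)^((d-3)/2)) * (y^2*(1-y^3)^(d-3-(d-3)/2)) +
        (x^2+y^2) * ((1-x^3)^(d-2)*(1-y^3)^(d-2)) := by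
  have hx3 : x^3 ≤ 1 := pow_le_one₀ hx0 hx1
  have hy3 : y^3 ≤ 1 := pow_le_one₀ hy0 hy1
  have hx30 : 0 ≤ x^3 := pow_nonneg hx0 3
  have hy30 : 0 ≤ y^3 := pow_nonneg hy0 3
  have hPx : (0:ℝ) ≤ 1 - x^3 := by linarith
  have hPy : (0:ℝ) ≤ 1 - y^3 := by linarith
  have hxy0 : (0:ℝ) ≤ x^2*y^2 := mul_nonneg (sq_nonneg x) (sq_nonneg y)
  have hm1 : x*y ≤ min x y := by
    rcases le_total x y with h | h
    · rw [min_eq_left h]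
      calc x*y ≤ x*1 := mul_le_mul_of_nonneg_left hy1 hx0
        _ = x := mul_one x
    · rw [min_eq_right h]
      calc x*y ≤ 1*y := mul_le_mul_of_nonneg_right hx1 hy0
        _ = y := one_mul y
  have hm0 : 0 ≤ min x y := le_min hx0 hy0
  have hmx : min x y ≤ x := min_le_left x y
  have hmy : min x y ≤ y := min_le_right x y
  have hm1' : min x y ≤ 1 := hmx.trans hx1
  have hM0 : 0 ≤ max x y := le_max_of_le_left hx0
  have hM1 : max x y ≤ 1 := max_le hx1 hy1
  have hM2 : max x y ^ 2 ≤ x^2 + y^2 := by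
    rcases max_choice x y with h | h <;> rw [h]
    · linarith [sq_nonneg y]
    · linarith [sq_nonneg x]
  have hM20 : max x y ^ 2 ≤ 1 := pow_le_one₀ hM0 hM1
  have h1M0 : (0:ℝ) ≤ 1 - max x y ^ 2 := by linarith
  have h1M1 : 1 - max x y ^ 2 ≤ 1 := by linarith [sq_nonneg (max x y)]
  have p1 : x^3*y^3 ≤ x^2*y^2*min x y := by
    calc x^3*y^3 = x^2*y^2*(x*y) := by ring
      _ ≤ x^2*y^2*min x y := mul_le_mul_of_nonneg_left hm1 hxy0
  have p2 : x^2*y^2*min x y ≤ x^2*y^2 := by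
    calc x^2*y^2*min x y ≤ x^2*y^2*1 := mul_le_mul_of_nonneg_left hm1' hxy0
      _ = x^2*y^2 := mul_one _
  have p3 : (0:ℝ) ≤ x^3*y^3 := mul_nonneg hx30 hy30
  have p4 : x^2*y^2*min x y ≤ y^3 := by
    calc x^2*y^2*min x y ≤ x^2*y^2*y := mul_le_mul_of_nonneg_left hmy hxy0
      _ = x^2*y^3 := by ring
      _ ≤ y^3 := mul_le_of_le_one_left hy30 (pow_le_one₀ hx0 hx1)
  have p5 : x^2*y^2*min x y ≤ x^3 := by
    calc x^2*y^2*min x y ≤ x^2*y^2*x := mul_le_mul_of_nonneg_left hmx hxy0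
      _ = y^2*x^3 := by ring
      _ ≤ x^3 := mul_le_of_le_one_left hx30 (pow_le_one₀ hy0 hy1)
  have q1 : x^3 ≤ x^2 := by
    calc x^3 = x^2*x := by ring
      _ ≤ x^2*1 := mul_le_mul_of_nonneg_left hx1 (sq_nonneg x)
      _ = x^2 := mul_one _
  have q2 : y^3 ≤ y^2 := by
    calc y^3 = y^2*y := by ring
      _ ≤ y^2*1 := mul_le_mul_of_nonneg_left hy1 (sq_nonneg y)
      _ = y^2 := mul_one _
  have q3 : x^3*y^3 ≤ x^3 := mul_le_of_le_one_right hx30 hy3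
  have keyB : (1-x^3)*(1-y^3) = 1 - x^3 - y^3 + x^3*y^3 := by ring
  have hB0 : (0:ℝ) ≤ (1-x^3)*(1-y^3) := mul_nonneg hPx hPy
  have hAB : (1-x^3)*(1-y^3) ≤ 1 - x ^ 3 - y ^ 3 + x ^ 2 * y ^ 2 * min x y := by
    rw [keyB]; linarith
  have hA0 : (0:ℝ) ≤ 1 - x ^ 3 - y ^ 3 + x ^ 2 * y ^ 2 * min x y := hB0.trans hAB
  have hABub : (1 - x ^ 3 - y ^ 3 + x ^ 2 * y ^ 2 * min x y) - (1-x^3)*(1-y^3) ≤ x^2*y^2 := by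
    rw [keyB]; linarith
  have hAx : 1 - x ^ 3 - y ^ 3 + x ^ 2 * y ^ 2 * min x y ≤ 1 - x^3 := by linarith
  have hAy : 1 - x ^ 3 - y ^ 3 + x ^ 2 * y ^ 2 * min x y ≤ 1 - y^3 := by linarith
  have habs : |1 - max x y ^ 2 - (1-x^3)*(1-y^3)| ≤ x^2 + y^2 := by
    rw [abs_le, keyB]
    constructor
    · linarith [sq_nonneg (max x y)]
    · linarith
  set A := 1 - x ^ 3 - y ^ 3 + x ^ 2 * y ^ 2 * min x y with hA
  set B := (1 - x^3) * (1 - y^3) with hB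
  set e := d - 2 with he'
  set k := (d-3)/2 with hk'
  set k' := d-3-(d-3)/2 with hk''
  have he : d - 1 = e + 1 := by omega
  have he2 : e - 1 = d - 3 := by omega
  have hkk : k + k' = d - 3 := by omega
  have hBsplit : (1 - x ^ 3) ^ (d - 1) * (1 - y ^ 3) ^ (d - 1) = B^e * B := by
    rw [hB, ← mul_pow, he, pow_succ]
  have hsplit : A ^ e * (1 - max x y ^ 2) - (1 - x ^ 3) ^ (d - 1) * (1 - y ^ 3) ^ (d - 1)
      = (A^e - B^e) * (1 - max x y ^ 2) + B^e * ((1 - max x y ^ 2) - B) := by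
    rw [hBsplit]; ring
  have hpowle : B^e ≤ A^e := pow_le_pow_left₀ hB0 hAB e
  have hApow : A^(e-1) ≤ (1-x^3)^k * (1-y^3)^k' := by
    rw [he2, ← hkk, pow_add]
    exact mul_le_mul (pow_le_pow_left₀ hA0 hAx k) (pow_le_pow_left₀ hA0 hAy k')
      (pow_nonneg hA0 _) (pow_nonneg hPx k)
  have hQ0 : 0 ≤ (1-x^3)^k * (1-y^3)^k' := mul_nonneg (pow_nonneg hPx k) (pow_nonneg hPy k')
  have hcast : ((e:ℕ):ℝ) = (d:ℝ) - 2 := by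
    rw [he']; push_cast [Nat.cast_sub (by omega : 2 ≤ d)]; ring
  have hpow : A^e - B^e ≤ ((d:ℝ)-2) * ((1-x^3)^k * (1-y^3)^k') * (x^2*y^2) := by
    calc A^e - B^e ≤ (e:ℝ) * A^(e-1) * ((A:ℝ)-B) := pow_sub_pow_le' hB0 hAB e
      _ ≤ (e:ℝ) * ((1-x^3)^k * (1-y^3)^k') * (x^2*y^2) := by
          apply mul_le_mul
          · exact mul_le_mul_of_nonneg_left hApow (Nat.cast_nonneg e)
          · exact hABub
          · linarith
          · exact mul_nonneg (Nat.cast_nonneg e) hQ0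
      _ = ((d:ℝ)-2) * ((1-x^3)^k * (1-y^3)^k') * (x^2*y^2) := by rw [hcast]
  have hBe : B^e = (1-x^3)^e * (1-y^3)^e := by rw [hB, mul_pow]
  have hBe0 : 0 ≤ B^e := pow_nonneg hB0 e
  calc ‖A ^ e * (1 - max x y ^ 2) - (1 - x ^ 3) ^ (d - 1) * (1 - y ^ 3) ^ (d - 1)‖
      ≤ ‖(A^e - B^e) * (1 - max x y ^ 2)‖ + ‖B^e * ((1 - max x y ^ 2) - B)‖ := by
        rw [hsplit]; exact norm_add_le _ _
    _ ≤ (A^e - B^e) * 1 + B^e * (x^2+y^2) := by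
        apply add_le_add
        · rw [Real.norm_eq_abs, abs_mul, abs_of_nonneg (by linarith : (0:ℝ) ≤ A^e - B^e),
            abs_of_nonneg h1M0]
          exact mul_le_mul_of_nonneg_left h1M1 (by linarith)
        · rw [Real.norm_eq_abs, abs_mul, abs_of_nonneg hBe0]
          exact mul_le_mul_of_nonneg_left habs hBe0
    _ ≤ ((d:ℝ) - 2) * (x^2*(1-x^3)^k) * (y^2*(1-y^3)^k') + (x^2+y^2) * ((1-x^3)^e*(1-y^3)^e) := by
        rw [mul_one, ← hBe]
        exact add_le_add (hpow.trans (le_of_eq (by ring))) (le_of_eq (mul_comm _ _))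

lemma key_bound (d : ℕ) (hd : 4 ≤ d) :
    ‖∫ x in (0 : ℝ)..1, ∫ y in (0 : ℝ)..1,
        ((1 - x ^ 3 - y ^ 3 + x ^ 2 * y ^ 2 * min x y) ^ (d - 2) * (1 - max x y ^ 2) -
          (1 - x ^ 3) ^ (d - 1) * (1 - y ^ 3) ^ (d - 1))‖ ≤ 4 * (d:ℝ)⁻¹ := by
  set e := d - 2 with he'
  set k := (d-3)/2 with hk'
  set k' := d-3-(d-3)/2 with hk''
  set J := ∫ t in (0:ℝ)..1, (1-t^3)^e with hJdef
  have hJ0 : 0 ≤ J := int_pow_nonneg e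
  have hJ1 : J ≤ 1 := int_pow_le_one e
  set G : ℝ → ℝ := fun x => (((d:ℝ)-2) * (1/(3*((k':ℝ)+1)))) * (x^2*(1-x^3)^k) +
      (J * (x^2*(1-x^3)^e) + (1/(3*((e:ℝ)+1))) * (1-x^3)^e) with hG
  have hGcont : Continuous G := by rw [hG]; fun_prop
  have hd2 : (0:ℝ) ≤ (d:ℝ) - 2 := by
    have : (4:ℝ) ≤ (d:ℝ) := by exact_mod_cast hd
    linarith
  have hinner : ∀ x ∈ Set.Icc (0:ℝ) 1, ‖∫ y in (0:ℝ)..1,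
      ((1 - x ^ 3 - y ^ 3 + x ^ 2 * y ^ 2 * min x y) ^ (d - 2) * (1 - max x y ^ 2) -
        (1 - x ^ 3) ^ (d - 1) * (1 - y ^ 3) ^ (d - 1))‖ ≤ G x := by
    intro x hx
    obtain ⟨hx0, hx1⟩ := hx
    have hPx : (0:ℝ) ≤ 1 - x^3 := by nlinarith [pow_le_one₀ hx0 hx1 (n := 3)]
    have hb := intervalIntegral.norm_integral_le_abs_of_norm_le (μ := volume) (a := (0:ℝ)) (b := 1)
      (f := fun y => ((1 - x ^ 3 - y ^ 3 + x ^ 2 * y ^ 2 * min x y) ^ (d - 2) * (1 - max x y ^ 2) -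
        (1 - x ^ 3) ^ (d - 1) * (1 - y ^ 3) ^ (d - 1)))
      (g := fun y => (((d:ℝ)-2) * (x^2*(1-x^3)^k)) * (y^2*(1-y^3)^k') +
        (((1-x^3)^e) * (y^2*(1-y^3)^e) + (x^2*(1-x^3)^e) * (1-y^3)^e))
      ?_ ?_
    · refine hb.trans ?_
      rw [int_comb]
      rw [abs_of_nonneg (by positivity)]
      rw [hG]
      apply le_of_eq
      ring
    · apply MeasureTheory.ae_restrict_of_forall_mem measurableSet_uIoc
      intro y hy
      rw [Set.uIoc_of_le (by norm_num : (0:ℝ) ≤ 1)] at hy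
      refine (pointwise_bound d hd hx0 hx1 hy.1.le hy.2).trans (le_of_eq (by ring))
    · exact (by fun_prop : Continuous fun y : ℝ => (((d:ℝ)-2) * (x^2*(1-x^3)^k)) * (y^2*(1-y^3)^k') +
        (((1-x^3)^e) * (y^2*(1-y^3)^e) + (x^2*(1-x^3)^e) * (1-y^3)^e)).intervalIntegrable 0 1
  have houter := intervalIntegral.norm_integral_le_abs_of_norm_le (μ := volume) (a := (0:ℝ)) (b := 1)
    (f := fun x => ∫ y in (0:ℝ)..1,
      ((1 - x ^ 3 - y ^ 3 + x ^ 2 * y ^ 2 * min x y) ^ (d - 2) * (1 - max x y ^ 2) -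
        (1 - x ^ 3) ^ (d - 1) * (1 - y ^ 3) ^ (d - 1))) (g := G)
    (MeasureTheory.ae_restrict_of_forall_mem measurableSet_uIoc (fun x hx => by
      rw [Set.uIoc_of_le (by norm_num : (0:ℝ) ≤ 1)] at hx
      exact hinner x ⟨hx.1.le, hx.2⟩))
    (hGcont.intervalIntegrable 0 1)
  refine houter.trans ?_
  have hGval : (∫ x in (0:ℝ)..1, G x) = (((d:ℝ)-2) * (1/(3*((k':ℝ)+1)))) * (1/(3*((k:ℝ)+1))) +
      (J * (1/(3*((e:ℝ)+1))) + (1/(3*((e:ℝ)+1))) * J) := by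
    rw [hG]
    exact int_comb _ _ _ k e
  rw [hGval]
  -- numeric bound
  have hD : (4:ℝ) ≤ (d:ℝ) := by exact_mod_cast hd
  have hKnat : d - 2 ≤ 2*(k+1) := by omega
  have hK'nat : d - 2 ≤ 2*(k'+1) := by omega
  have hK : (d:ℝ) - 2 ≤ 2*((k:ℝ)+1) := by
    have := (Nat.cast_le (α := ℝ)).2 hKnat
    push_cast [Nat.cast_sub (by omega : 2 ≤ d)] at this
    linarith
  have hK' : (d:ℝ) - 2 ≤ 2*((k':ℝ)+1) := by
    have := (Nat.cast_le (α := ℝ)).2 hK'nat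
    push_cast [Nat.cast_sub (by omega : 2 ≤ d)] at this
    linarith
  have hE : (e:ℝ) = (d:ℝ) - 2 := by
    rw [he']; push_cast [Nat.cast_sub (by omega : 2 ≤ d)]; ring
  have hKpos : (0:ℝ) < 3*((k:ℝ)+1) := by positivity
  have hK'pos : (0:ℝ) < 3*((k':ℝ)+1) := by positivity
  have h1 : 1/(3*((k':ℝ)+1)) ≤ 2/(3*((d:ℝ)-2)) := by
    rw [div_le_div_iff₀ hK'pos (by linarith)]
    linarith
  have h2 : 1/(3*((k:ℝ)+1)) ≤ 2/(3*((d:ℝ)-2)) := by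
    rw [div_le_div_iff₀ hKpos (by linarith)]
    linarith
  have habs1 : |(((d:ℝ)-2) * (1/(3*((k':ℝ)+1)))) * (1/(3*((k:ℝ)+1))) +
      (J * (1/(3*((e:ℝ)+1))) + (1/(3*((e:ℝ)+1))) * J)| = (((d:ℝ)-2) * (1/(3*((k':ℝ)+1)))) * (1/(3*((k:ℝ)+1))) +
      (J * (1/(3*((e:ℝ)+1))) + (1/(3*((e:ℝ)+1))) * J) := by
    apply abs_of_nonneg
    have hEpos : (0:ℝ) < (e:ℝ)+1 := by rw [hE]; linarith
    positivity
  rw [habs1]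
  have hT1 : (((d:ℝ)-2) * (1/(3*((k':ℝ)+1)))) * (1/(3*((k:ℝ)+1))) ≤ 8/(9*(d:ℝ)) := by
    have step : (1/(3*((k':ℝ)+1))) * (1/(3*((k:ℝ)+1))) ≤ (2/(3*((d:ℝ)-2))) * (2/(3*((d:ℝ)-2))) := by
      apply mul_le_mul h1 h2 (by positivity) (by positivity)
    have step2 : ((d:ℝ)-2) * ((2/(3*((d:ℝ)-2))) * (2/(3*((d:ℝ)-2)))) = 4/(9*((d:ℝ)-2)) := by
      have hne : ((d:ℝ)-2) ≠ 0 := by linarith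
      field_simp
      ring
    have step3 : 4/(9*((d:ℝ)-2)) ≤ 8/(9*(d:ℝ)) := by
      rw [div_le_div_iff₀ (by linarith) (by linarith)]
      linarith
    calc (((d:ℝ)-2) * (1/(3*((k':ℝ)+1)))) * (1/(3*((k:ℝ)+1)))
        = ((d:ℝ)-2) * ((1/(3*((k':ℝ)+1))) * (1/(3*((k:ℝ)+1)))) := by ring
      _ ≤ ((d:ℝ)-2) * ((2/(3*((d:ℝ)-2))) * (2/(3*((d:ℝ)-2)))) :=
          mul_le_mul_of_nonneg_left step hd2
      _ = 4/(9*((d:ℝ)-2)) := step2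
      _ ≤ 8/(9*(d:ℝ)) := step3
  have hT2 : J * (1/(3*((e:ℝ)+1))) ≤ 2/(3*(d:ℝ)) := by
    have hEpos : (0:ℝ) < 3*((e:ℝ)+1) := by rw [hE]; linarith
    have : J * (1/(3*((e:ℝ)+1))) ≤ 1 * (1/(3*((e:ℝ)+1))) :=
      mul_le_mul_of_nonneg_right hJ1 (by positivity)
    refine this.trans ?_
    rw [one_mul, div_le_div_iff₀ hEpos (by linarith), hE]
    linarith
  have hfin : 8/(9*(d:ℝ)) + (2/(3*(d:ℝ)) + 2/(3*(d:ℝ))) ≤ 4 * (d:ℝ)⁻¹ := by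
    have hD0 : (0:ℝ) < (d:ℝ) := by linarith
    have heq : 8/(9*(d:ℝ)) + (2/(3*(d:ℝ)) + 2/(3*(d:ℝ))) = (20/9) * ((d:ℝ))⁻¹ := by
      have hne : ((d:ℝ)) ≠ 0 := hD0.ne'
      field_simp
      ring
    rw [heq]
    exact mul_le_mul_of_nonneg_right (by norm_num) (inv_nonneg.2 hD0.le)
  calc (((d:ℝ)-2) * (1/(3*((k':ℝ)+1)))) * (1/(3*((k:ℝ)+1))) +
      (J * (1/(3*((e:ℝ)+1))) + (1/(3*((e:ℝ)+1))) * J)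
      ≤ 8/(9*(d:ℝ)) + (2/(3*(d:ℝ)) + 2/(3*(d:ℝ))) := by
        refine add_le_add hT1 (add_le_add hT2 ?_)
        rw [mul_comm]
        exact hT2
    _ ≤ 4 * (d:ℝ)⁻¹ := hfin

/-- With `f(x,y,d) = (1 − x³)^(d−1)·(1 − y³)^(d−1)` and
`g(x,y,d) = (1 − x³ − y³ + x²y²·min{x,y})^(d−2)·(1 − (max{x,y})²)`, one has
`∫₀¹∫₀¹ (g − f) dx dy = o(d^(−2/3))` as `d → ∞`. -/
theorem integral_g_sub_f_isLittleO :
    (fun d : ℕ => ∫ x in (0 : ℝ)..1, ∫ y in (0 : ℝ)..1,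
        ((1 - x ^ 3 - y ^ 3 + x ^ 2 * y ^ 2 * min x y) ^ (d - 2) * (1 - max x y ^ 2) -
          (1 - x ^ 3) ^ (d - 1) * (1 - y ^ 3) ^ (d - 1)))
      =o[atTop] (fun d : ℕ => (d : ℝ) ^ (-(2 : ℝ) / 3)) := by
  have h1 : (fun d : ℕ => ∫ x in (0 : ℝ)..1, ∫ y in (0 : ℝ)..1,
      ((1 - x ^ 3 - y ^ 3 + x ^ 2 * y ^ 2 * min x y) ^ (d - 2) * (1 - max x y ^ 2) -
        (1 - x ^ 3) ^ (d - 1) * (1 - y ^ 3) ^ (d - 1)))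
      =O[atTop] (fun d : ℕ => ((d:ℝ))⁻¹) := by
    rw [isBigO_iff]
    refine ⟨4, ?_⟩
    filter_upwards [eventually_ge_atTop 4] with d hd
    refine (key_bound d hd).trans (le_of_eq ?_)
    rw [Real.norm_eq_abs, abs_of_nonneg (by positivity)]
  have ht : Tendsto (fun d : ℕ => (d:ℝ)^(-(1:ℝ)/3)) atTop (nhds 0) := by
    have h := tendsto_rpow_neg_atTop (y := (1:ℝ)/3) (by norm_num)
    have := h.comp (tendsto_natCast_atTop_atTop (R := ℝ))
    convert this using 2 with d
    norm_num
  have h0 : (fun d : ℕ => (d:ℝ)^(-(1:ℝ)/3)) =o[atTop] (fun _ : ℕ => (1:ℝ)) :=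
    (isLittleO_one_iff ℝ).2 ht
  have h3 := (isBigO_refl (fun d : ℕ => (d:ℝ)^(-(2:ℝ)/3)) atTop).mul_isLittleO h0
  have h2 : (fun d : ℕ => ((d:ℝ))⁻¹) =o[atTop] (fun d : ℕ => (d:ℝ)^(-(2:ℝ)/3)) := by
    refine h3.congr' ?_ ?_
    · filter_upwards [eventually_ge_atTop 1] with d hd
      have hd0 : (0:ℝ) < (d:ℝ) := by exact_mod_cast hd
      rw [← Real.rpow_add hd0]
      norm_num
      rw [Real.rpow_neg_one]
    · filter_upwards with d
      rw [mul_one]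
  exact h1.trans_isLittleO h2
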